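/- Let P be a probability measure with density p supported on an open convex set X ⊆ R^d, such that for every R > 0 there exist 0 < λ_R ≤ Λ_R with λ_R ≤ p(x) ≤ Λ_R for all x ∈ X ∩ RB_d. Let φ be a convex potential with ∇φ♯P = U_d (the spherical uniform on B_d). Then ∂φ(X) ∩ S^{d-1} = ∅: no point in the interior of the support can have a subgradient on the unit sphere. -/

import Mathlib

open Metric MeasureTheory Real Classical
open RealInnerProductSpace
open scoped ENNReal

private lemma vol_pi_box (d : ℕ) (i₀ : Fin d) (I J : Set ℝ) :
    volume (Set.univ.pi (fun i => if i = i₀ then I else J))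
      = volume I * volume J ^ (d - 1) := by
  rw [volume_pi_pi]
  rw [← Finset.mul_prod_erase Finset.univ _ (Finset.mem_univ i₀)]
  simp only [if_pos rfl]
  congr 1
  rw [Finset.prod_congr rfl (fun i hi => by rw [if_neg (Finset.ne_of_mem_erase hi)]),
    Finset.prod_const, Finset.card_erase_of_mem (Finset.mem_univ _), Finset.card_univ,
    Fintype.card_fin]

private lemma abs_coord_le_norm (d : ℕ) (v : EuclideanSpace ℝ (Fin d)) (i : Fin d) :
    |v i| ≤ ‖v‖ := by
  rw [EuclideanSpace.norm_eq]
  calc |v i| = Real.sqrt (‖v i‖^2) := by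
        rw [Real.sqrt_sq (norm_nonneg _), Real.norm_eq_abs]
    _ ≤ _ := Real.sqrt_le_sqrt (Finset.single_le_sum
        (f := fun j => ‖v j‖^2) (fun j _ => by positivity) (Finset.mem_univ i))

set_option maxHeartbeats 1000000 in
/-- No interior point of the convex support of a probability `P` (with density bounded
and bounded away from `0` on compacts) can have, under the optimal transport potential
`φ` pushing `P` to the spherical uniform `U_d`, a subgradient on the unit sphere:
`∂φ(X) ∩ S^{d-1} = ∅`. -/
theorem subgradient_interior_not_on_sphere (d : ℕ) (hd : 1 ≤ d)
    (X : Set (EuclideanSpace ℝ (Fin d))) (hXo : IsOpen X) (hXconv : Convex ℝ X)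
    (p : EuclideanSpace ℝ (Fin d) → ℝ)
    (hp0 : ∀ x ∉ X, p x = 0)
    (hprob : ∫⁻ x, ENNReal.ofReal (p x) = 1)
    (hAssumptionA : ∀ R : ℝ, 0 < R → ∃ lam Lam : ℝ, 0 < lam ∧ lam ≤ Lam ∧
      ∀ x ∈ X ∩ ball (0 : EuclideanSpace ℝ (Fin d)) R, lam ≤ p x ∧ p x ≤ Lam)
    (a : ℝ) (ha : a = 2 * π ^ ((d : ℝ) / 2) / Gamma ((d : ℝ) / 2))
    (u : EuclideanSpace ℝ (Fin d) → ℝ≥0∞)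
    (hu : ∀ x, u x = if x ∈ ball (0 : EuclideanSpace ℝ (Fin d)) 1 \ {0}
      then ENNReal.ofReal (1 / (a * ‖x‖ ^ (d - 1))) else 0)
    (φ : EuclideanSpace ℝ (Fin d) → ℝ) (hφ : ConvexOn ℝ Set.univ φ)
    (htransport : ∀ A : Set (EuclideanSpace ℝ (Fin d)), MeasurableSet A →
      ∫⁻ y in ⋃ x ∈ A, {z : EuclideanSpace ℝ (Fin d) | ∀ w, φ x + ⟪z, w - x⟫ ≤ φ w},
        u y = ∫⁻ x in A, ENNReal.ofReal (p x)) :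
    ∀ x ∈ X, ∀ z : EuclideanSpace ℝ (Fin d),
      (∀ w, φ x + ⟪z, w - x⟫ ≤ φ w) → ‖z‖ ≠ 1 := by
  intro x hx z hzsub hz1
  set n := d - 1 with hn
  -- basic positivity facts
  have hdR : (0:ℝ) < d := by exact_mod_cast hd
  have hapos : 0 < a := by
    have h1 : 0 < Real.Gamma ((d:ℝ)/2) := Real.Gamma_pos_of_pos (by positivity)
    rw [ha]; positivity
  -- a ball around x inside X
  obtain ⟨r, hr0, hrX⟩ := Metric.isOpen_iff.1 hXo x hx
  set ε := r / 2 with hεdef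
  have hε0 : 0 < ε := by positivity
  have hball : ball x (2*ε) ⊆ X := by
    have : 2*ε = r := by rw [hεdef]; ring
    rw [this]; exact hrX
  -- lower bound on the density near x
  have hR0 : (0:ℝ) < ‖x‖ + 2*ε := by positivity
  obtain ⟨lam, Lam, hlam0, -, hlam⟩ := hAssumptionA (‖x‖ + 2*ε) hR0
  -- constants and the scale η
  set c1 : ℝ := lam * ((ε/2) * (ε/(d:ℝ))^n) with hc1def
  set c2 : ℝ := (2^n/a) * (2 * 4^n) with hc2def
  have hc1 : 0 < c1 := by rw [hc1def]; positivity
  have hc2 : 0 < c2 := by rw [hc2def]; positivity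
  set η := min (1/2 : ℝ) (Real.sqrt (c1/(2*c2))) with hηdef
  have hη0 : 0 < η := lt_min (by norm_num) (Real.sqrt_pos.2 (by positivity))
  have hηhalf : η ≤ 1/2 := min_le_left _ _
  have hηsq : η^2 ≤ c1/(2*c2) := by
    calc η^2 ≤ (Real.sqrt (c1/(2*c2)))^2 :=
          pow_le_pow_left₀ hη0.le (min_le_right _ _) 2
      _ = c1/(2*c2) := Real.sq_sqrt (by positivity)
  set δ := η * ε / (2*(d:ℝ)) with hδdef
  have hδ0 : 0 < δ := by rw [hδdef]; positivity
  clear_value c1 c2 η δ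
  -- an orthonormal basis whose i₀-th vector is z
  set i₀ : Fin d := ⟨0, hd⟩ with hi₀
  obtain ⟨b, hb⟩ : ∃ b : OrthonormalBasis (Fin d) ℝ (EuclideanSpace ℝ (Fin d)), b i₀ = z := by
    have hcard : Module.finrank ℝ (EuclideanSpace ℝ (Fin d)) = Fintype.card (Fin d) := by
      simp [finrank_euclideanSpace_fin]
    have horth : Orthonormal ℝ (Set.restrict {i₀} (fun _ : Fin d => z)) := by
      constructor
      · intro i; exact hz1
      · intro i j hij
        exact absurd (Subtype.ext ((Set.mem_singleton_iff.1 i.2).trans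
          (Set.mem_singleton_iff.1 j.2).symm)) hij
    obtain ⟨b, hb⟩ := horth.exists_orthonormalBasis_extension_of_card_eq hcard
    exact ⟨b, hb _ rfl⟩
  have hrepr0 : ∀ v : EuclideanSpace ℝ (Fin d), b.repr v i₀ = ⟪z, v⟫ := fun v => by
    rw [b.repr_apply_apply, hb]
  have hreprz : b.repr z = EuclideanSpace.single i₀ 1 := by
    rw [← hb, b.repr_self]
  -- the pi sets
  set s₀ : Fin d → Set ℝ :=
    fun i => if i = i₀ then Set.Ioo (ε/2) ε else Set.Ioo (-δ) δ with hs₀def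
  set s₁ : Fin d → Set ℝ :=
    fun i => if i = i₀ then Set.Icc (1-2*η^2) 1 else Set.Icc (-(2*η)) (2*η) with hs₁def
  have hs₀m : ∀ i, MeasurableSet (s₀ i) := fun i => by
    rw [hs₀def]; dsimp only; split <;> exact measurableSet_Ioo
  have hs₁m : ∀ i, MeasurableSet (s₁ i) := fun i => by
    rw [hs₁def]; dsimp only; split <;> exact measurableSet_Icc
  -- the cone-like set K and the cap-like set B
  set e := (MeasurableEquiv.toLp 2 (Fin d → ℝ)).symm with hedef
  set K : Set (EuclideanSpace ℝ (Fin d)) :=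
    (fun x' => e (b.repr (x' - x))) ⁻¹' (Set.univ.pi s₀) with hKdef
  set B : Set (EuclideanSpace ℝ (Fin d)) :=
    (fun y => e (b.repr y)) ⁻¹' (Set.univ.pi s₁) with hBdef
  have mpK : MeasurePreserving
      (fun x' : EuclideanSpace ℝ (Fin d) => e (b.repr (x' - x))) volume volume :=
    ((EuclideanSpace.volume_preserving_symm_measurableEquiv_toLp (Fin d)).comp
      b.measurePreserving_repr).comp (measurePreserving_sub_right volume x)
  have mpB : MeasurePreserving
      (fun y : EuclideanSpace ℝ (Fin d) => e (b.repr y)) volume volume :=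
    (EuclideanSpace.volume_preserving_symm_measurableEquiv_toLp (Fin d)).comp
      b.measurePreserving_repr
  have hKm : MeasurableSet K := mpK.measurable (MeasurableSet.univ_pi hs₀m)
  have hBm : MeasurableSet B := mpB.measurable (MeasurableSet.univ_pi hs₁m)
  have hvolK : volume K = ENNReal.ofReal (ε/2) * ENNReal.ofReal (2*δ) ^ n := by
    rw [hKdef, mpK.measure_preimage (MeasurableSet.univ_pi hs₀m).nullMeasurableSet,
      vol_pi_box d i₀ _ _, Real.volume_Ioo, Real.volume_Ioo, ← hn]
    congr 2 <;> ring
  have hvolB : volume B = ENNReal.ofReal (2*η^2) * ENNReal.ofReal (4*η) ^ n := by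
    rw [hBdef, mpB.measure_preimage (MeasurableSet.univ_pi hs₁m).nullMeasurableSet,
      vol_pi_box d i₀ _ _, Real.volume_Icc, Real.volume_Icc, ← hn]
    congr 2 <;> ring
  -- membership consequences for K
  have hKprop : ∀ x' ∈ K, (lam ≤ p x') ∧
      (∀ y : EuclideanSpace ℝ (Fin d), ‖y‖ ≤ 1 →
        (0:ℝ) ≤ ⟪y - z, x' - x⟫ → 1 - ⟪y, z⟫ ≤ η * ‖y - z‖) := by
    intro x' hx'
    have hmem : ∀ i, b.repr (x' - x) i ∈ s₀ i := by
      intro i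
      have := (Set.mem_univ_pi.1 (Set.mem_preimage.1 hx')) i
      exact this
    set t := b.repr (x' - x) i₀ with htdef
    have ht : t ∈ Set.Ioo (ε/2) ε := by
      have h : b.repr (x' - x) i₀ ∈
          (if i₀ = i₀ then Set.Ioo (ε/2) ε else Set.Ioo (-δ) δ) := hmem i₀
      rwa [if_pos rfl] at h
    have htinner : ⟪z, x' - x⟫ = t := (hrepr0 _).symm
    clear_value t
    set w : EuclideanSpace ℝ (Fin d) := (x' - x) - t • z with hwdef
    have hdecomp : x' - x = t • z + w := by rw [hwdef]; abel
    clear_value w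
    have hwnorm : ‖w‖ ≤ η * ε / 2 := by
      have hrw : b.repr w = b.repr (x' - x) - t • EuclideanSpace.single i₀ 1 := by
        rw [hwdef, _root_.map_sub, _root_.map_smul, hreprz]
      have hcomp : ∀ i, ‖(b.repr w) i‖^2 ≤ δ^2 := by
        intro i
        rw [hrw]
        by_cases hi : i = i₀
        · subst hi
          have heq : ((b.repr (x' - x) - t • EuclideanSpace.single i₀ 1 :
              EuclideanSpace ℝ (Fin d)) i₀) = 0 := by
            simp [PiLp.sub_apply, PiLp.smul_apply, EuclideanSpace.single_apply, htdef]
          rw [heq, norm_zero]; nlinarith [hδ0]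
        · have hmi : b.repr (x' - x) i ∈
              (if i = i₀ then Set.Ioo (ε/2) ε else Set.Ioo (-δ) δ) := hmem i
          rw [if_neg hi, Set.mem_Ioo] at hmi
          have heq : ((b.repr (x' - x) - t • EuclideanSpace.single i₀ 1 :
              EuclideanSpace ℝ (Fin d)) i) = b.repr (x' - x) i := by
            simp [PiLp.sub_apply, PiLp.smul_apply, EuclideanSpace.single_apply, hi]
          rw [heq, Real.norm_eq_abs, sq_abs]
          exact sq_le_sq' (by linarith [hmi.1]) (by linarith [hmi.2])
      have hsum : ∑ i, ‖(b.repr w) i‖^2 ≤ (η * ε / 2)^2 := by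
        calc ∑ i, ‖(b.repr w) i‖^2 ≤ ∑ _i : Fin d, δ^2 :=
              Finset.sum_le_sum (fun i _ => hcomp i)
          _ = d * δ^2 := by rw [Finset.sum_const, Finset.card_univ, Fintype.card_fin,
                nsmul_eq_mul]
          _ ≤ (η * ε / 2)^2 := by
              have hd1R : (1:ℝ) ≤ (d:ℝ) := by exact_mod_cast hd
              have h0 : (0:ℝ) ≤ (η*ε)^2 := sq_nonneg _
              have hstep : (d:ℝ) * δ^2 = (η*ε)^2 / (4*(d:ℝ)) := by
                rw [hδdef]; field_simp; ring
              have h4 : (4:ℝ) ≤ 4*(d:ℝ) := by nlinarith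
              have hone := one_div_le_one_div_of_le (by norm_num : (0:ℝ) < 4) h4
              calc (d:ℝ) * δ^2 = (η*ε)^2 * (1/(4*(d:ℝ))) := by rw [hstep]; ring
                _ ≤ (η*ε)^2 * (1/4) := mul_le_mul_of_nonneg_left hone h0
                _ = (η * ε / 2)^2 := by ring
      calc ‖w‖ = ‖b.repr w‖ := (b.repr.norm_map w).symm
        _ = Real.sqrt (∑ i, ‖(b.repr w) i‖^2) := EuclideanSpace.norm_eq _
        _ ≤ Real.sqrt ((η * ε / 2)^2) := Real.sqrt_le_sqrt hsum
        _ = η * ε / 2 := Real.sqrt_sq (by positivity)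
    have hx'dist : ‖x' - x‖ < 2 * ε := by
      have habs : |t| < ε := abs_lt.2 ⟨by nlinarith [ht.1, hε0], ht.2⟩
      have h1 : ‖x' - x‖ ≤ |t| + ‖w‖ := by
        calc ‖x' - x‖ = ‖t • z + w‖ := by rw [← hdecomp]
          _ ≤ ‖t • z‖ + ‖w‖ := norm_add_le _ _
          _ = |t| + ‖w‖ := by rw [norm_smul, hz1, Real.norm_eq_abs, mul_one]
      have h2 : η * ε ≤ ε := by nlinarith [hηhalf, hε0, hη0]
      linarith [hwnorm]
    have hx'X : x' ∈ X := hball (by rwa [mem_ball_iff_norm])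
    have hx'ball : x' ∈ ball (0 : EuclideanSpace ℝ (Fin d)) (‖x‖ + 2*ε) := by
      rw [mem_ball_zero_iff]
      have hxx : x + (x' - x) = x' := by abel
      calc ‖x'‖ = ‖x + (x' - x)‖ := by rw [hxx]
        _ ≤ ‖x‖ + ‖x' - x‖ := norm_add_le _ _
        _ < ‖x‖ + 2*ε := by linarith
    refine ⟨(hlam x' ⟨hx'X, hx'ball⟩).1, ?_⟩
    intro y hy hmono
    have hexp : ⟪y - z, x' - x⟫ = t * (⟪y, z⟫ - 1) + ⟪y - z, w⟫ := by
      rw [hdecomp, inner_add_right, real_inner_smul_right]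
      have : ⟪y - z, z⟫ = ⟪y, z⟫ - 1 := by
        rw [inner_sub_left, real_inner_self_eq_norm_sq, hz1]; norm_num
      rw [this]
    have hCS : ⟪y - z, w⟫ ≤ ‖y - z‖ * ‖w‖ := real_inner_le_norm _ _
    have ht0 : 0 < t := lt_trans (by positivity) ht.1
    have step : t * (1 - ⟪y, z⟫) ≤ ‖y - z‖ * (η * ε / 2) := by
      have := hmono
      rw [hexp] at this
      nlinarith [hCS, mul_le_mul_of_nonneg_left hwnorm (norm_nonneg (y - z))]
    have step2 : t * (1 - ⟪y, z⟫) ≤ t * (η * ‖y - z‖) := by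
      calc t * (1 - ⟪y, z⟫) ≤ ‖y - z‖ * (η * ε / 2) := step
        _ ≤ ‖y - z‖ * (η * t) := by
            apply mul_le_mul_of_nonneg_left _ (norm_nonneg _)
            have : ε / 2 ≤ t := le_of_lt ht.1
            nlinarith [hη0]
        _ = t * (η * ‖y - z‖) := by ring
    exact le_of_mul_le_mul_left step2 ht0
  -- the subdifferential image of K lies in B (within the punctured ball)
  set S := ⋃ x' ∈ K, {z' : EuclideanSpace ℝ (Fin d) | ∀ w, φ x' + ⟪z', w - x'⟫ ≤ φ w}
    with hSdef
  have hSsub : S ⊆ B ∪ (ball (0 : EuclideanSpace ℝ (Fin d)) 1 \ {0})ᶜ := by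
    intro y hy
    by_cases hyb : y ∈ ball (0 : EuclideanSpace ℝ (Fin d)) 1 \ {0}
    swap
    · exact Or.inr hyb
    left
    obtain ⟨x', hx'K, hysub⟩ := Set.mem_iUnion₂.1 hy
    have hyn : ‖y‖ ≤ 1 := le_of_lt (mem_ball_zero_iff.1 hyb.1)
    -- monotonicity of the subdifferential
    have hmono : (0:ℝ) ≤ ⟪y - z, x' - x⟫ := by
      have h1 := hzsub x'
      have h2 := hysub x
      have h3 : ⟪y, x - x'⟫ = -⟪y, x' - x⟫ := by
        rw [← inner_neg_right]; congr 1; abel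
      rw [h3] at h2
      have h4 : ⟪z, x' - x⟫ ≤ ⟪y, x' - x⟫ := by linarith
      rw [inner_sub_left]; linarith
    have hkey := (hKprop x' hx'K).2 y hyn hmono
    -- derive ‖y - z‖ ≤ 2η and 1 - ⟪y,z⟫ ≤ 2η²
    have hq : ‖y - z‖ ≤ 2 * η := by
      have hsq : ‖y - z‖^2 ≤ 2 * (1 - ⟪y, z⟫) := by
        have := norm_sub_sq_real y z
        rw [hz1] at this
        nlinarith [hyn, norm_nonneg y]
      have h5 : ‖y - z‖ * ‖y - z‖ ≤ (2*η) * ‖y - z‖ := by nlinarith [hkey]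
      rcases lt_or_ge 0 ‖y - z‖ with h6 | h6
      · exact le_of_mul_le_mul_right h5 h6
      · have : ‖y - z‖ = 0 := le_antisymm h6 (norm_nonneg _)
        rw [this]; positivity
    have hcap : 1 - 2*η^2 ≤ ⟪y, z⟫ := by nlinarith [hkey, hη0]
    have hup : ⟪y, z⟫ ≤ 1 := by
      calc ⟪y, z⟫ ≤ ‖y‖ * ‖z‖ := real_inner_le_norm _ _
        _ ≤ 1 := by rw [hz1]; linarith
    -- conclude membership in B
    rw [hBdef]
    refine Set.mem_preimage.2 (Set.mem_univ_pi.2 (fun i => ?_))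
    by_cases hi : i = i₀
    · subst hi
      have : (e (b.repr y)) i₀ = ⟪y, z⟫ := by
        have : b.repr y i₀ = ⟪z, y⟫ := hrepr0 y
        rw [show (e (b.repr y)) i₀ = b.repr y i₀ from rfl, this, real_inner_comm]
      rw [this]
      have hsval : s₁ i₀ = Set.Icc (1-2*η^2) 1 := if_pos rfl
      rw [hsval]
      exact Set.mem_Icc.2 ⟨hcap, hup⟩
    · have hsval : s₁ i = Set.Icc (-(2*η)) (2*η) := if_neg hi
      rw [hsval]
      have h7 : b.repr y i = b.repr (y - z) i := by
        rw [map_sub]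
        have : b.repr z i = 0 := by
          rw [hreprz, EuclideanSpace.single_apply, if_neg hi]
        simp [this]
      have h8 : |b.repr (y - z) i| ≤ ‖y - z‖ := by
        calc |b.repr (y - z) i| ≤ ‖b.repr (y - z)‖ := abs_coord_le_norm d _ i
          _ = ‖y - z‖ := b.repr.norm_map _
      have h9 : |(e (b.repr y)) i| ≤ 2*η := by
        rw [show (e (b.repr y)) i = b.repr y i from rfl, h7]
        linarith [h8, hq]
      rw [Set.mem_Icc]
      constructor <;> [skip; skip] <;> cases' abs_le.1 h9 with hl hr
      · linarith
      · linarith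
  -- density bound on B
  have hdens : ∀ y ∈ B, u y ≤ ENNReal.ofReal (2^n / a) := by
    intro y hyB
    rw [hu y]
    split
    case isFalse => exact zero_le
    case isTrue hyball =>
      apply ENNReal.ofReal_le_ofReal
      have hy0 : (1:ℝ)/2 ≤ ‖y‖ := by
        have hmem : b.repr y i₀ ∈
            (if i₀ = i₀ then Set.Icc (1-2*η^2) 1 else Set.Icc (-(2*η)) (2*η)) :=
          (Set.mem_univ_pi.1 (Set.mem_preimage.1 hyB)) i₀
        rw [if_pos rfl] at hmem
        have h1 : (1:ℝ) - 2*η^2 ≤ b.repr y i₀ := by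
          exact hmem.1
        have h2 : b.repr y i₀ ≤ |b.repr y i₀| := le_abs_self _
        have h3 : |b.repr y i₀| ≤ ‖b.repr y‖ := abs_coord_le_norm d _ i₀
        have h4 : ‖b.repr y‖ = ‖y‖ := b.repr.norm_map y
        nlinarith [hηhalf, hη0]
      have hpow : ((1:ℝ)/2)^n ≤ ‖y‖^n := pow_le_pow_left₀ (by norm_num) hy0 n
      have hden0 : (0:ℝ) < a * ((1:ℝ)/2)^n := by positivity
      calc 1 / (a * ‖y‖ ^ n) ≤ 1 / (a * ((1:ℝ)/2)^n) := by
            apply one_div_le_one_div_of_le hden0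
            exact mul_le_mul_of_nonneg_left hpow hapos.le
        _ = 2^n / a := by
            rw [div_pow, one_pow]
            field_simp
      done
  -- the transport identity on K
  have hKlow : ENNReal.ofReal lam * volume K ≤ ∫⁻ x' in K, ENNReal.ofReal (p x') := by
    rw [← setLIntegral_const K (ENNReal.ofReal lam)]
    refine lintegral_mono_ae ?_
    filter_upwards [ae_restrict_mem hKm] with x' hx'
    exact ENNReal.ofReal_le_ofReal (hKprop x' hx').1
  have hZm : MeasurableSet ((ball (0 : EuclideanSpace ℝ (Fin d)) 1 \ {0})ᶜ) :=
    (measurableSet_ball.diff (measurableSet_singleton 0)).compl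
  have hSup : ∫⁻ y in S, u y ≤ ENNReal.ofReal (2^n/a) * volume B := by
    calc ∫⁻ y in S, u y
        ≤ ∫⁻ y in B ∪ (ball (0 : EuclideanSpace ℝ (Fin d)) 1 \ {0})ᶜ, u y :=
          lintegral_mono' (Measure.restrict_mono hSsub le_rfl) le_rfl
      _ ≤ (∫⁻ y in B, u y) + ∫⁻ y in (ball (0 : EuclideanSpace ℝ (Fin d)) 1 \ {0})ᶜ, u y :=
          lintegral_union_le _ _ _
      _ ≤ ENNReal.ofReal (2^n/a) * volume B + 0 := by
          refine add_le_add ?_ ?_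
          · rw [← setLIntegral_const B (ENNReal.ofReal (2^n/a))]
            refine lintegral_mono_ae ?_
            filter_upwards [ae_restrict_mem hBm] with y hy
            exact hdens y hy
          · refine le_of_eq ?_
            rw [setLIntegral_congr_fun hZm
              (fun y hy => by rw [hu y, if_neg hy] : ∀ y, y ∈ _ → u y = (fun _ => 0) y)]
            simp
      _ = ENNReal.ofReal (2^n/a) * volume B := add_zero _
  have hmain : ENNReal.ofReal lam * volume K ≤ ENNReal.ofReal (2^n/a) * volume B := by
    calc ENNReal.ofReal lam * volume K ≤ ∫⁻ x' in K, ENNReal.ofReal (p x') := hKlow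
      _ = ∫⁻ y in S, u y := (htransport K hKm).symm
      _ ≤ ENNReal.ofReal (2^n/a) * volume B := hSup
  rw [hvolK, hvolB] at hmain
  -- pass to real numbers
  have hreal : lam * ((ε/2) * (2*δ)^n) ≤ (2^n/a) * ((2*η^2) * (4*η)^n) := by
    rw [← ENNReal.ofReal_le_ofReal_iff (by positivity)]
    calc ENNReal.ofReal (lam * ((ε/2) * (2*δ)^n))
        = ENNReal.ofReal lam * (ENNReal.ofReal (ε/2) * ENNReal.ofReal (2*δ) ^ n) := by
          rw [ENNReal.ofReal_mul hlam0.le, ENNReal.ofReal_mul (by positivity),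
            ENNReal.ofReal_pow (by positivity)]
      _ ≤ ENNReal.ofReal (2^n/a) * (ENNReal.ofReal (2*η^2) * ENNReal.ofReal (4*η) ^ n) :=
          hmain
      _ = ENNReal.ofReal ((2^n/a) * ((2*η^2) * (4*η)^n)) := by
          rw [← ENNReal.ofReal_pow (by positivity : (0:ℝ) ≤ 4*η),
            ← ENNReal.ofReal_mul (by positivity : (0:ℝ) ≤ 2*η^2),
            ← ENNReal.ofReal_mul (by positivity : (0:ℝ) ≤ 2^n/a)]
  -- final contradiction
  have hδval : 2*δ = η * (ε/(d:ℝ)) := by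
    have hdne : (d:ℝ) ≠ 0 := ne_of_gt hdR
    rw [hδdef]; field_simp
  have key : c1 * η^n ≤ (c2 * η^2) * η^n := by
    calc c1 * η^n = lam * ((ε/2) * (2*δ)^n) := by
          rw [hδval, mul_pow, hc1def]; ring
      _ ≤ (2^n/a) * ((2*η^2) * (4*η)^n) := hreal
      _ = (c2 * η^2) * η^n := by rw [mul_pow, hc2def]; ring
  have h5 : c1 ≤ c2 * η^2 := le_of_mul_le_mul_right key (pow_pos hη0 n)
  have h6 : c2 * η^2 ≤ c1/2 := by
    calc c2 * η^2 ≤ c2 * (c1/(2*c2)) := mul_le_mul_of_nonneg_left hηsq hc2.le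
      _ = c1/2 := by field_simp
  linarith
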